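/- Let N ≥ 2 and M = (m_0, m_1, …, m_N) ∈ ℂ^{N+1} with m_0 ∈ ℝ and (m_1, …, m_N) ≠ 0. Suppose r', r ∈ (0, 1] satisfy λ(r'; N−1) = 0 and λ(r; N) = 0, where λ(s; K) denotes the minimum eigenvalue of the Hermitian Toeplitz matrix H_K(M_K^*(s)) built from (m_0, …, m_K). Then r ≥ r'. -/

import Mathlib

open ComplexOrder

/-- Extension of the moment sequence to `ℤ` by the convention `m_{−k} = conj(m_k)`. -/
noncomputable def mz (m : ℕ → ℂ) : ℤ → ℂ :=
  fun k => if 0 ≤ k then m k.toNat else (starRingEnd ℂ) (m (-k).toNat)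

/-- The Toeplitz matrix `H_K(M_K^*(s))` with entries `m_{l−j} s^{−|l−j|}`. -/
noncomputable def toeplitzStar (K : ℕ) (m : ℕ → ℂ) (s : ℝ) :
    Matrix (Fin (K + 1)) (Fin (K + 1)) ℂ :=
  fun j l => mz m ((l : ℤ) - (j : ℤ)) * (s : ℂ) ^ (-(((l : ℤ) - (j : ℤ)).natAbs : ℤ))

lemma peel_sum (x : ℝ) (j : ℕ) :
    ∑ α ∈ Finset.range (j+1), (if α = 0 then (1:ℝ) else 1 - x) * x ^ (j - α) = 1 := by
  rw [Finset.sum_range_succ']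
  simp only [Nat.succ_ne_zero, if_false, if_pos rfl, Nat.sub_zero, one_mul, if_true,
    eq_self_iff_true]
  have h1 : ∑ α ∈ Finset.range j, (1 - x) * x ^ (j - (α+1))
      = ∑ α ∈ Finset.range j, (1 - x) * x ^ α := by
    rw [← Finset.sum_range_reflect (fun α => (1 - x) * x ^ α) j]
    refine Finset.sum_congr rfl fun α hα => ?_
    show (1 - x) * x ^ (j - (α+1)) = (1 - x) * x ^ (j - 1 - α)
    congr 2
    omega
  rw [h1, ← Finset.mul_sum]
  linear_combination -geom_sum_mul x j

/-- The weight function in the Gram decomposition of the KMS matrix. -/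
noncomputable def cc (ρ : ℝ) (α : ℕ) : ℝ := if α = 0 then 1 else 1 - ρ^2

/-- The Gram vectors of the KMS matrix. -/
noncomputable def uu (ρ : ℝ) (α j : ℕ) : ℝ := if α ≤ j then ρ ^ (j - α) else 0

/-- The associated diagonal matrices. -/
noncomputable def DD (ρ : ℝ) (K : ℕ) (α : Fin (K+1)) :
    Matrix (Fin (K+1)) (Fin (K+1)) ℂ :=
  Matrix.diagonal fun j => ((uu ρ α j : ℝ) : ℂ)

lemma gram_sum (ρ : ℝ) (K j l : ℕ) (hjl : j ≤ l) (hl : l ≤ K) :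
    ∑ α ∈ Finset.range (K+1), cc ρ α * (uu ρ α j * uu ρ α l) = ρ ^ (l - j) := by
  unfold cc uu
  rw [← Finset.sum_subset (Finset.range_subset_range.mpr (by omega : j+1 ≤ K+1))
    (fun α _ hα => by
      rw [Finset.mem_range, not_lt] at hα
      rw [if_neg (show ¬ α ≤ j by omega)]
      ring)]
  have key : ∀ α ∈ Finset.range (j+1),
      (if α = 0 then (1:ℝ) else 1 - ρ^2) *
        ((if α ≤ j then ρ ^ (j - α) else 0) * (if α ≤ l then ρ ^ (l - α) else 0))
      = ((if α = 0 then (1:ℝ) else 1 - ρ^2) * (ρ^2) ^ (j - α)) * ρ ^ (l - j) := by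
    intro α hα
    rw [Finset.mem_range] at hα
    rw [if_pos (show α ≤ j by omega), if_pos (show α ≤ l by omega)]
    have h2 : ρ ^ (j - α) * ρ ^ (l - α) = (ρ^2) ^ (j - α) * ρ ^ (l - j) := by
      rw [← pow_add, ← pow_mul, ← pow_add]
      congr 1
      omega
    rw [h2]
    ring
  rw [Finset.sum_congr rfl key, ← Finset.sum_mul, peel_sum (ρ^2) j, one_mul]

open scoped Matrix in
lemma dot_sum {n ι : Type*} [Fintype n] [Fintype ι] (v : n → ℂ) (w : ι → n → ℂ) :
    v ⬝ᵥ (∑ i, w i) = ∑ i, v ⬝ᵥ w i := by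
  simp only [dotProduct, Finset.sum_apply, Finset.mul_sum]
  exact Finset.sum_comm

open scoped Matrix in
lemma sum_mulVec' {n ι : Type*} [Fintype n] [Fintype ι] [DecidableEq n]
    (A : ι → Matrix n n ℂ) (v : n → ℂ) :
    (∑ i, A i) *ᵥ v = ∑ i, (A i) *ᵥ v := by
  ext x
  simp only [Matrix.mulVec, dotProduct, Finset.sum_apply, Matrix.sum_apply,
    Finset.sum_mul]
  exact Finset.sum_comm

open scoped Matrix in
/-- If `λ(r'; N−1) = 0` and `λ(r; N) = 0`, then `r ≥ r'`.  Here the statement that the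
minimum eigenvalue of the Hermitian Toeplitz matrix `H_K(M_K^*(s))` is zero is expressed as:
the matrix is positive semi-definite and singular. -/
theorem radius_monotone (N : ℕ) (hN : 2 ≤ N) (m : ℕ → ℂ) (hm0 : (m 0).im = 0)
    (hm : ∃ k, 1 ≤ k ∧ k ≤ N ∧ m k ≠ 0)
    (r' r : ℝ) (hr' : r' ∈ Set.Ioc (0 : ℝ) 1) (hr : r ∈ Set.Ioc (0 : ℝ) 1)
    (h' : (toeplitzStar (N - 1) m r').PosSemidef ∧
      ∃ v : Fin (N - 1 + 1) → ℂ, v ≠ 0 ∧ (toeplitzStar (N - 1) m r').mulVec v = 0)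
    (h : (toeplitzStar N m r).PosSemidef ∧
      ∃ v : Fin (N + 1) → ℂ, v ≠ 0 ∧ (toeplitzStar N m r).mulVec v = 0) :
    r' ≤ r := by
  by_contra hcon
  push_neg at hcon
  obtain ⟨hr0, hr1⟩ := hr
  obtain ⟨hr'0, hr'1⟩ := hr'
  obtain ⟨k, hk1, hkN, hmk⟩ := hm
  obtain ⟨-, v, hvne, hv⟩ := h'
  have hrC : (r : ℂ) ≠ 0 := by exact_mod_cast hr0.ne'
  have hr'C : (r' : ℂ) ≠ 0 := by exact_mod_cast hr'0.ne'
  -- `m 0 ≠ 0`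
  have hm0ne : m 0 ≠ 0 := by
    intro h0
    have hsx : star (Pi.single (0 : Fin (N+1)) (1:ℂ)) = (Pi.single 0 1 : Fin (N+1) → ℂ) := by
      ext i
      simp [Pi.single_apply, apply_ite]
    have hAx : (toeplitzStar N m r) *ᵥ (Pi.single (0 : Fin (N+1)) (1:ℂ)) = 0 := by
      rw [← (h.1.dotProduct_mulVec_zero_iff _)]
      rw [hsx, single_dotProduct, one_mul, Matrix.mulVec_single]
      simp [toeplitzStar, mz, h0]
    have hk' := congrFun hAx ⟨k, by omega⟩
    rw [Matrix.mulVec_single_one] at hk'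
    simp only [mul_one, Pi.zero_apply, Matrix.col_apply] at hk'
    have hco : ((⟨k, by omega⟩ : Fin (N+1)) : ℤ) = (k : ℤ) := rfl
    have h00 : ((0 : Fin (N+1)) : ℤ) = 0 := rfl
    rw [show (toeplitzStar N m r) ⟨k, by omega⟩ 0
        = mz m (0 - (k:ℤ)) * (r:ℂ) ^ (-(((0 - (k:ℤ)).natAbs : ℕ) : ℤ)) from rfl] at hk'
    have hmz : mz m (0 - (k:ℤ)) = (starRingEnd ℂ) (m k) := by
      rw [mz]
      rw [if_neg (by omega)]
      rw [show (-(0 - (k:ℤ))).toNat = k by omega]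
    rw [hmz] at hk'
    rcases mul_eq_zero.mp hk' with hc | hc
    · exact hmk (by simpa using hc)
    · exact zpow_ne_zero _ hrC hc
  set ρ : ℝ := r / r' with hρdef
  have hρ0 : 0 < ρ := div_pos hr0 hr'0
  have hρ1 : ρ < 1 := (div_lt_one hr'0).mpr hcon
  have hcpos : ∀ α : ℕ, 0 < cc ρ α := by
    intro α
    rw [cc]
    split
    · exact one_pos
    · nlinarith
  -- `B` is positive semidefinite
  have hB : (toeplitzStar (N-1) m r).PosSemidef := by
    have hsub : toeplitzStar (N-1) m r = (toeplitzStar N m r).submatrix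
        (Fin.castLE (by omega : N - 1 + 1 ≤ N + 1))
        (Fin.castLE (by omega : N - 1 + 1 ≤ N + 1)) := by
      ext j l
      simp [toeplitzStar, Matrix.submatrix_apply, Fin.coe_castLE]
    rw [hsub]
    exact h.1.submatrix _
  -- the key matrix identity
  have hmat : toeplitzStar (N-1) m r' = ∑ α : Fin (N-1+1),
      ((cc ρ (α:ℕ) : ℝ) : ℂ) • (DD ρ (N-1) α * toeplitzStar (N-1) m r * DD ρ (N-1) α) := by
    ext j l
    rw [Matrix.sum_apply]
    have hent : ∀ α : Fin (N-1+1),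
        (((cc ρ (α:ℕ) : ℝ) : ℂ) • (DD ρ (N-1) α * toeplitzStar (N-1) m r * DD ρ (N-1) α)) j l
        = (((cc ρ (α:ℕ) * (uu ρ (α:ℕ) (j:ℕ) * uu ρ (α:ℕ) (l:ℕ))) : ℝ) : ℂ)
            * toeplitzStar (N-1) m r j l := by
      intro α
      simp only [DD, Matrix.smul_apply, Matrix.mul_diagonal, Matrix.diagonal_mul,
        smul_eq_mul]
      push_cast
      ring
    rw [Finset.sum_congr rfl (fun α _ => hent α), ← Finset.sum_mul, ← Complex.ofReal_sum]
    have hsum : ∑ α : Fin (N-1+1), cc ρ (α:ℕ) * (uu ρ (α:ℕ) (j:ℕ) * uu ρ (α:ℕ) (l:ℕ))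
        = ρ ^ (((l:ℤ) - (j:ℤ)).natAbs) := by
      rw [Fin.sum_univ_eq_sum_range (fun α => cc ρ α * (uu ρ α (j:ℕ) * uu ρ α (l:ℕ))) (N-1+1)]
      rcases le_total (j:ℕ) (l:ℕ) with hjl | hjl
      · rw [show (((l:ℤ) - (j:ℤ)).natAbs) = (l:ℕ) - (j:ℕ) by omega]
        exact gram_sum ρ (N-1) j l hjl (by omega)
      · rw [show (((l:ℤ) - (j:ℤ)).natAbs) = (j:ℕ) - (l:ℕ) by omega]
        rw [Finset.sum_congr rfl
          (fun α _ => by rw [mul_comm (uu ρ α (j:ℕ)) (uu ρ α (l:ℕ))])]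
        exact gram_sum ρ (N-1) l j hjl (by omega)
    rw [hsum]
    show mz m ((l:ℤ) - (j:ℤ)) * (r' : ℂ) ^ (-((((l:ℤ) - (j:ℤ)).natAbs : ℕ) : ℤ)) = _
    have hkey : (r' : ℂ) ^ (-((((l:ℤ) - (j:ℤ)).natAbs : ℕ) : ℤ))
        = ((ρ ^ (((l:ℤ) - (j:ℤ)).natAbs) : ℝ) : ℂ)
          * (r : ℂ) ^ (-((((l:ℤ) - (j:ℤ)).natAbs : ℕ) : ℤ)) := by
      set d : ℕ := ((l:ℤ) - (j:ℤ)).natAbs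
      rw [zpow_neg, zpow_neg, zpow_natCast, zpow_natCast, hρdef]
      push_cast
      rw [div_pow]
      field_simp
    rw [hkey]
    show _ = _ * (mz m ((l:ℤ) - (j:ℤ)) * (r : ℂ) ^ (-((((l:ℤ) - (j:ℤ)).natAbs : ℕ) : ℤ)))
    ring
  -- each PSD piece
  have hPSDα : ∀ α : Fin (N-1+1),
      (DD ρ (N-1) α * toeplitzStar (N-1) m r * DD ρ (N-1) α).PosSemidef := by
    intro α
    have hH : (DD ρ (N-1) α)ᴴ = DD ρ (N-1) α := by
      simp only [DD, Matrix.diagonal_conjTranspose]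
      rw [show (star fun j : Fin (N-1+1) => ((uu ρ (α:ℕ) (j:ℕ) : ℝ) : ℂ))
          = fun j : Fin (N-1+1) => ((uu ρ (α:ℕ) (j:ℕ) : ℝ) : ℂ)
        from funext fun i => Complex.conj_ofReal _]
    have := hB.conjTranspose_mul_mul_same (DD ρ (N-1) α)
    rwa [hH] at this
  -- quadratic form vanishes termwise
  have hq0 : ∑ α : Fin (N-1+1), ((cc ρ (α:ℕ) : ℝ) : ℂ)
      * (star v ⬝ᵥ (DD ρ (N-1) α * toeplitzStar (N-1) m r * DD ρ (N-1) α) *ᵥ v) = 0 := by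
    have h1 : star v ⬝ᵥ (toeplitzStar (N-1) m r') *ᵥ v = 0 := by
      rw [hv, dotProduct_zero]
    rw [hmat, sum_mulVec', dot_sum] at h1
    simpa [Matrix.smul_mulVec, dotProduct_smul, smul_eq_mul] using h1
  have heach : ∀ α : Fin (N-1+1),
      (DD ρ (N-1) α * toeplitzStar (N-1) m r * DD ρ (N-1) α) *ᵥ v = 0 := by
    have hnn : ∀ α : Fin (N-1+1), 0 ≤ ((cc ρ (α:ℕ) : ℝ) : ℂ)
        * (star v ⬝ᵥ (DD ρ (N-1) α * toeplitzStar (N-1) m r * DD ρ (N-1) α) *ᵥ v) :=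
      fun α => mul_nonneg (Complex.zero_le_real.mpr (hcpos _).le) ((hPSDα α).dotProduct_mulVec_nonneg v)
    have hz := (Fintype.sum_eq_zero_iff_of_nonneg hnn).mp hq0
    intro α
    have hzα := congrFun hz α
    simp only [Pi.zero_apply] at hzα
    have : star v ⬝ᵥ (DD ρ (N-1) α * toeplitzStar (N-1) m r * DD ρ (N-1) α) *ᵥ v = 0 := by
      rcases mul_eq_zero.mp hzα with hc | hc
      · exact absurd hc (by exact_mod_cast (hcpos (α:ℕ)).ne')
      · exact hc
    exact ((hPSDα α).dotProduct_mulVec_zero_iff v).mp this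
  -- downward induction kills v
  have step : ∀ j : Fin (N-1+1), (∀ l : Fin (N-1+1), (j:ℕ) < (l:ℕ) → v l = 0) → v j = 0 := by
    intro j hgt
    have hE := congrFun (heach j) j
    simp only [Matrix.mulVec, dotProduct, Pi.zero_apply, DD,
      Matrix.mul_diagonal, Matrix.diagonal_mul] at hE
    rw [Finset.sum_eq_single_of_mem j (Finset.mem_univ j)
      (fun l _ hne => by
        rcases lt_or_gt_of_ne (fun hval => hne (Fin.ext hval) : (l:ℕ) ≠ (j:ℕ)) with hlt | hgt'
        · rw [show uu ρ (j:ℕ) (l:ℕ) = 0 from if_neg (by omega)]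
          simp
        · rw [hgt l hgt', mul_zero])] at hE
    rw [show uu ρ (j:ℕ) (j:ℕ) = 1 by rw [uu, if_pos le_rfl, Nat.sub_self, pow_zero]] at hE
    rw [show toeplitzStar (N-1) m r j j = m 0 by
      show mz m ((j:ℤ) - (j:ℤ)) * _ = _
      rw [sub_self]
      simp [mz]] at hE
    simp only [Complex.ofReal_one, one_mul, mul_one] at hE
    exact (mul_eq_zero.mp hE).resolve_left hm0ne
  have hvz : ∀ (t : ℕ) (j : Fin (N-1+1)), (N-1) - (j:ℕ) ≤ t → v j = 0 := by
    intro t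
    induction t with
    | zero => exact fun j hj => step j (fun l hl => absurd hl (by have := l.isLt; omega))
    | succ t IH => exact fun j hj => step j (fun l hl => IH l (by have := l.isLt; omega))
  exact hvne (funext fun j => hvz (N-1) j (by omega))
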